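/- Fix $\lambda>0$ and $s\in(0,1]$ with $\lambda s > \ln 2$. Then there exists a unique $t^*\in(0,s)$ satisfying $e^{\lambda(s-2t^*)}=\frac{1+\lambda(s-t^*)}{2}$, and this $t^*$ maximizes $\theta(t,s)$ over $[0,s]$. -/

import Mathlib

open Real Set

noncomputable def gfun (lam s t : ℝ) : ℝ :=
  lam * (s - 2 * t) - Real.log ((1 + lam * (s - t)) / 2)

noncomputable def thfun (lam s t : ℝ) : ℝ :=
  (1 / lam) * (1 - Real.exp (-(lam * t))) +
    (1 / lam) * (1 - Real.exp (-(lam * (s - t))) * (1 + lam * (s - t) / 2))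

lemma gfun_hasDerivAt (lam s t : ℝ) (hpos : 0 < 1 + lam * (s - t)) :
    HasDerivAt (gfun lam s) (-2 * lam + lam / (1 + lam * (s - t))) t := by
  have h1 : HasDerivAt (fun t : ℝ => (1 + lam * (s - t)) / 2) (-lam / 2) t := by
    have : HasDerivAt (fun t : ℝ => s - t) (-1) t :=
      (hasDerivAt_id t).const_sub s |>.congr_deriv (by ring)
    have h2 := ((this.const_mul lam).const_add 1).div_const 2
    exact h2.congr_deriv (by ring)
  have hlog : HasDerivAt (fun t : ℝ => Real.log ((1 + lam * (s - t)) / 2))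
      ((-lam / 2) / ((1 + lam * (s - t)) / 2)) t := h1.log (by positivity)
  have h3 : HasDerivAt (fun t : ℝ => lam * (s - 2 * t)) (-2 * lam) t := by
    have : HasDerivAt (fun t : ℝ => s - 2 * t) (-2) t := by
      simpa using ((hasDerivAt_id t).const_mul 2).const_sub s
    simpa [mul_comm] using this.const_mul lam
  have := h3.sub hlog
  refine this.congr_deriv ?_
  field_simp
  ring

lemma thfun_hasDerivAt (lam s t : ℝ) (hlam : 0 < lam) :
    HasDerivAt (thfun lam s)
      (Real.exp (-(lam * t)) - Real.exp (-(lam * (s - t))) * (1 + lam * (s - t)) / 2) t := by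
  have e1 : HasDerivAt (fun t : ℝ => -(lam * t)) (-lam) t := by
    exact ((hasDerivAt_id t).const_mul lam).neg.congr_deriv (by ring)
  have e2 : HasDerivAt (fun t : ℝ => -(lam * (s - t))) lam t := by
    have : HasDerivAt (fun t : ℝ => s - t) (-1) t := (hasDerivAt_id t).const_sub s
    have := (this.const_mul lam).neg
    exact this.congr_deriv (by ring)
  have e3 : HasDerivAt (fun t : ℝ => 1 + lam * (s - t) / 2) (-(lam / 2)) t := by
    have h : HasDerivAt (fun t : ℝ => s - t) (-1) t := (hasDerivAt_id t).const_sub s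
    have := ((h.const_mul lam).div_const 2).const_add 1
    exact this.congr_deriv (by ring)
  have A : HasDerivAt (fun t : ℝ => (1 : ℝ) - Real.exp (-(lam * t)))
      (lam * Real.exp (-(lam * t))) t := by
    have := (e1.exp).const_sub 1
    exact this.congr_deriv (by ring)
  have B : HasDerivAt (fun t : ℝ => Real.exp (-(lam * (s - t))) * (1 + lam * (s - t) / 2))
      (lam * Real.exp (-(lam * (s - t))) * (1 + lam * (s - t) / 2)
        + Real.exp (-(lam * (s - t))) * (-(lam / 2))) t := by
    have := (e2.exp).mul e3
    exact this.congr_deriv (by ring)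
  have C := (A.const_mul (1 / lam)).add ((B.const_sub 1).const_mul (1 / lam))
  refine C.congr_deriv ?_
  field_simp
  ring

theorem stmt_9 (lam : ℝ) (hlam : 0 < lam) (s : ℝ) (hs : s ∈ Set.Ioc (0 : ℝ) 1)
    (hls : Real.log 2 < lam * s) :
    ∃ tstar ∈ Set.Ioo (0 : ℝ) s,
      Real.exp (lam * (s - 2 * tstar)) = (1 + lam * (s - tstar)) / 2 ∧
      (∀ t ∈ Set.Icc (0 : ℝ) s,
        (1 / lam) * (1 - Real.exp (-(lam * t))) +
          (1 / lam) * (1 - Real.exp (-(lam * (s - t))) * (1 + lam * (s - t) / 2)) ≤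
        (1 / lam) * (1 - Real.exp (-(lam * tstar))) +
          (1 / lam) * (1 - Real.exp (-(lam * (s - tstar))) * (1 + lam * (s - tstar) / 2))) ∧
      (∀ t ∈ Set.Ioo (0 : ℝ) s,
        Real.exp (lam * (s - 2 * t)) = (1 + lam * (s - t)) / 2 → t = tstar) := by
  obtain ⟨hs0, hs1⟩ := hs
  -- positivity of 1 + lam*(s-t) on [0,s]
  have hposIcc : ∀ t ∈ Icc (0:ℝ) s, 0 < 1 + lam * (s - t) := by
    intro t ht
    nlinarith [ht.2, hlam]
  -- g is strictly decreasing on [0,s]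
  have hgderiv : ∀ t ∈ Icc (0:ℝ) s,
      HasDerivAt (gfun lam s) (-2 * lam + lam / (1 + lam * (s - t))) t :=
    fun t ht => gfun_hasDerivAt lam s t (hposIcc t ht)
  have hgcont : ContinuousOn (gfun lam s) (Icc 0 s) :=
    fun t ht => ((hgderiv t ht).continuousAt).continuousWithinAt
  have hganti : StrictAntiOn (gfun lam s) (Icc 0 s) := by
    apply strictAntiOn_of_deriv_neg (convex_Icc 0 s) hgcont
    intro t ht
    rw [interior_Icc] at ht
    have ht' : t ∈ Icc (0:ℝ) s := ⟨le_of_lt ht.1, le_of_lt ht.2⟩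
    rw [(hgderiv t ht').deriv]
    have h1 : (0:ℝ) < 1 + lam * (s - t) := hposIcc t ht'
    have h2 : lam / (1 + lam * (s - t)) ≤ lam := by
      rw [div_le_iff₀ h1]
      nlinarith [mul_nonneg hlam.le (show (0:ℝ) ≤ s - t by linarith [ht.2])]
    linarith
  have hg0 : 0 < gfun lam s 0 := by
    have h1 : (1 + lam * s) / 2 < Real.exp (lam * s) := by
      have := Real.add_one_le_exp (lam * s)
      nlinarith [mul_pos hlam hs0]
    have h2 : Real.log ((1 + lam * s) / 2) < lam * s := by
      have hp : (0:ℝ) < (1 + lam * s) / 2 := by nlinarith [mul_pos hlam hs0]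
      calc Real.log ((1 + lam * s) / 2) < Real.log (Real.exp (lam * s)) :=
            Real.log_lt_log hp h1
        _ = lam * s := Real.log_exp _
    simp only [gfun, sub_zero, mul_zero]
    linarith [h2, show lam * (s - 2 * 0) = lam * s by ring]
  have hgs : gfun lam s s < 0 := by
    simp only [gfun, sub_self, mul_zero, add_zero]
    rw [Real.log_div one_ne_zero two_ne_zero, Real.log_one]
    nlinarith
  -- IVT
  have hmem : (0:ℝ) ∈ Ioo (gfun lam s s) (gfun lam s 0) := ⟨hgs, hg0⟩
  obtain ⟨tstar, htmem, hgz⟩ := intermediate_value_Ioo' (le_of_lt hs0) hgcont hmem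
  have htIcc : tstar ∈ Icc (0:ℝ) s := ⟨le_of_lt htmem.1, le_of_lt htmem.2⟩
  have hpost : 0 < 1 + lam * (s - tstar) := hposIcc tstar htIcc
  have heq : Real.exp (lam * (s - 2 * tstar)) = (1 + lam * (s - tstar)) / 2 := by
    have : lam * (s - 2 * tstar) = Real.log ((1 + lam * (s - tstar)) / 2) := by
      have := hgz; simp only [gfun] at this; linarith
    rw [this, Real.exp_log (by positivity)]
  -- sign of theta deriv via g
  have hderivsign : ∀ t ∈ Icc (0:ℝ) s,
      (Real.exp (-(lam * t)) - Real.exp (-(lam * (s - t))) * (1 + lam * (s - t)) / 2)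
        = Real.exp (-(lam * (s - t))) * (Real.exp (lam * (s - 2 * t)) - (1 + lam * (s - t)) / 2) := by
    intro t ht
    have key : -(lam*(s-t)) + lam*(s-2*t) = -(lam*t) := by ring
    rw [show Real.exp (-(lam*t)) = Real.exp (-(lam*(s-t))) * Real.exp (lam*(s-2*t)) from by
      rw [← Real.exp_add, key]]
    ring
  -- monotone on [0, tstar]
  have hthderiv : ∀ t : ℝ, HasDerivAt (thfun lam s)
      (Real.exp (-(lam * t)) - Real.exp (-(lam * (s - t))) * (1 + lam * (s - t)) / 2) t :=
    fun t => thfun_hasDerivAt lam s t hlam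
  have hthcont : ContinuousOn (thfun lam s) (Icc 0 s) :=
    fun t _ => ((hthderiv t).continuousAt).continuousWithinAt
  have hgpos : ∀ t ∈ Ico (0:ℝ) tstar, 0 < gfun lam s t := by
    intro t ht
    have ht' : t ∈ Icc (0:ℝ) s := ⟨ht.1, le_trans (le_of_lt ht.2) (le_of_lt htmem.2)⟩
    have := hganti ht' htIcc ht.2
    rw [hgz] at this; exact this
  have hgneg : ∀ t ∈ Ioc tstar s, gfun lam s t < 0 := by
    intro t ht
    have ht' : t ∈ Icc (0:ℝ) s := ⟨le_trans (le_of_lt htmem.1) (le_of_lt ht.1), ht.2⟩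
    have := hganti htIcc ht' ht.1
    rw [hgz] at this; exact this
  have hexpgt : ∀ t ∈ Icc (0:ℝ) s, 0 < gfun lam s t →
      0 < Real.exp (lam * (s - 2 * t)) - (1 + lam * (s - t)) / 2 := by
    intro t ht hg
    have hp : (0:ℝ) < (1 + lam * (s - t)) / 2 := by have := hposIcc t ht; positivity
    have : Real.log ((1 + lam * (s - t)) / 2) < lam * (s - 2 * t) := by
      simp only [gfun] at hg; linarith
    have := Real.exp_lt_exp.2 this
    rw [Real.exp_log hp] at this
    linarith
  have hexplt : ∀ t ∈ Icc (0:ℝ) s, gfun lam s t < 0 →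
      Real.exp (lam * (s - 2 * t)) - (1 + lam * (s - t)) / 2 < 0 := by
    intro t ht hg
    have hp : (0:ℝ) < (1 + lam * (s - t)) / 2 := by have := hposIcc t ht; positivity
    have : lam * (s - 2 * t) < Real.log ((1 + lam * (s - t)) / 2) := by
      simp only [gfun] at hg; linarith
    have := Real.exp_lt_exp.2 this
    rw [Real.exp_log hp] at this
    linarith
  have hmono : MonotoneOn (thfun lam s) (Icc 0 tstar) := by
    apply monotoneOn_of_deriv_nonneg (convex_Icc 0 tstar)
      (hthcont.mono (Icc_subset_Icc le_rfl (le_of_lt htmem.2)))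
      (fun t ht => ((hthderiv t).differentiableAt).differentiableWithinAt)
    intro t ht
    rw [interior_Icc] at ht
    have ht' : t ∈ Icc (0:ℝ) s := ⟨le_of_lt ht.1, le_trans (le_of_lt ht.2) (le_of_lt htmem.2)⟩
    rw [(hthderiv t).deriv, hderivsign t ht']
    have := hexpgt t ht' (hgpos t ⟨le_of_lt ht.1, ht.2⟩)
    positivity
  have hanti : AntitoneOn (thfun lam s) (Icc tstar s) := by
    apply antitoneOn_of_deriv_nonpos (convex_Icc tstar s)
      (hthcont.mono (Icc_subset_Icc (le_of_lt htmem.1) le_rfl))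
      (fun t ht => ((hthderiv t).differentiableAt).differentiableWithinAt)
    intro t ht
    rw [interior_Icc] at ht
    have ht' : t ∈ Icc (0:ℝ) s := ⟨le_trans (le_of_lt htmem.1) (le_of_lt ht.1), le_of_lt ht.2⟩
    rw [(hthderiv t).deriv, hderivsign t ht']
    have h1 := hexplt t ht' (hgneg t ⟨ht.1, le_of_lt ht.2⟩)
    have h2 : (0:ℝ) < Real.exp (-(lam * (s - t))) := Real.exp_pos _
    nlinarith
  refine ⟨tstar, htmem, heq, ?_, ?_⟩
  · intro t ht
    have hmax : thfun lam s t ≤ thfun lam s tstar := by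
      rcases le_total t tstar with h | h
      · exact hmono ⟨ht.1, h⟩ ⟨le_of_lt htmem.1, le_rfl⟩ h
      · exact hanti ⟨le_rfl, le_of_lt htmem.2⟩ ⟨h, ht.2⟩ h
    simpa [thfun] using hmax
  · intro t ht heqt
    have ht' : t ∈ Icc (0:ℝ) s := ⟨le_of_lt ht.1, le_of_lt ht.2⟩
    have hgt : gfun lam s t = 0 := by
      have hp : (0:ℝ) < (1 + lam * (s - t)) / 2 := by have := hposIcc t ht'; positivity
      have : lam * (s - 2 * t) = Real.log ((1 + lam * (s - t)) / 2) := by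
        rw [← heqt, Real.log_exp]
      simp only [gfun]; linarith
    have := hganti.injOn ht' htIcc (by rw [hgt, hgz])
    exact this
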